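/- In the lattice L̃(M) associated to a matroid M, the set G̃ consisting of all singleton independent sets {i} (for non-loop i) together with all starred flats F_* is a building set, and a subset N ⊆ G̃ is nested if and only if N = {{i} : i ∈ I} ∪ {F_* : F ∈ 𝓕} for some independent set I of M and some chain (flag) 𝓕 of flats of M with I ⊆ min(𝓕). -/

import Mathlib

open scoped Classical

variable {α : Type*}

/-- The underlying set of the poset `L̃(M)`: the disjoint union of the
independence complex of `M` and (a starred copy of) the collection of flats. -/
def TildeL (M : Matroid α) : Type _ :=
  {I : Set α // M.Indep I} ⊕ {F : Set α // M.IsFlat F}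

/-- The order on `L̃(M)`. -/
def tleq {M : Matroid α} : TildeL M → TildeL M → Prop
  | .inl I, .inl J => I.1 ⊆ J.1
  | .inl I, .inr F => I.1 ⊆ F.1
  | .inr _, .inl _ => False
  | .inr F, .inr G => F.1 ⊆ G.1

instance {M : Matroid α} : PartialOrder (TildeL M) where
  le := tleq
  le_refl x := by cases x <;> exact Set.Subset.rfl
  le_trans x y z h1 h2 := by
    rcases x with I | F <;> rcases y with J | G <;> rcases z with K | H <;>
      first
        | exact Set.Subset.trans h1 h2
        | exact h1.elim
        | exact h2.elim
  le_antisymm x y h1 h2 := by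
    rcases x with I | F <;> rcases y with J | G
    · exact congrArg Sum.inl (Subtype.ext (Set.Subset.antisymm h1 h2))
    · exact h2.elim
    · exact h1.elim
    · exact congrArg Sum.inr (Subtype.ext (Set.Subset.antisymm h1 h2))

instance {M : Matroid α} : OrderBot (TildeL M) where
  bot := Sum.inl ⟨∅, M.empty_indep⟩
  bot_le x := by cases x <;> exact Set.empty_subset _

/-- The set `G̃ ⊆ L̃(M)` of all singleton independent sets (non-loops) together
with all starred flats. -/
def tildeG (M : Matroid α) : Set (TildeL M) :=
  {x | (∃ i, ∃ h : M.Indep {i}, x = Sum.inl ⟨{i}, h⟩) ∨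
       (∃ F, ∃ h : M.IsFlat F, x = Sum.inr ⟨F, h⟩)}

/-- The maximal elements of `𝒢` lying below `X`. -/
def maxBelow {L : Type*} [PartialOrder L] (𝒢 : Set L) (X : L) : Type _ :=
  {G : L // G ∈ 𝒢 ∧ G ≤ X ∧ ∀ G' ∈ 𝒢, G' ≤ X → G ≤ G' → G' = G}

-- ============ auxiliary ============
namespace TAux

variable {M : Matroid α}

def carrier {M : Matroid α} : TildeL M → Set α
  | .inl I => I.1
  | .inr F => F.1

def inlT {M : Matroid α} (I : {I : Set α // M.Indep I}) : TildeL M := Sum.inl I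
def inrT {M : Matroid α} (F : {F : Set α // M.IsFlat F}) : TildeL M := Sum.inr F

lemma bot_eq : (⊥ : TildeL M) = Sum.inl ⟨∅, M.empty_indep⟩ := rfl

lemma carrier_mono : ∀ {x y : TildeL M}, x ≤ y → carrier x ⊆ carrier y
  | .inl _, .inl _, h => h
  | .inl _, .inr _, h => h
  | .inr _, .inl _, h => h.elim
  | .inr _, .inr _, h => h

lemma inl_le {I : {I : Set α // M.Indep I}} {y : TildeL M}
    (h : I.1 ⊆ carrier y) : inlT I ≤ y := by
  cases y with
  | inl K => exact h
  | inr F => exact h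

lemma le_inr {F : {F : Set α // M.IsFlat F}} {x : TildeL M}
    (h : carrier x ⊆ F.1) : x ≤ inrT F := by
  cases x with
  | inl K => exact h
  | inr G => exact h

lemma le_inl_cases {I : {I : Set α // M.Indep I}} {x : TildeL M}
    (h : x ≤ inlT I) :
      ∃ K : {K : Set α // M.Indep K}, x = inlT K ∧ K.1 ⊆ I.1 := by
  cases x with
  | inl K => exact ⟨K, rfl, h⟩
  | inr F => exact h.elim

lemma inr_le_cases {F : {F : Set α // M.IsFlat F}} {y : TildeL M}
    (h : inrT F ≤ y) :
      ∃ G : {G : Set α // M.IsFlat G}, y = inrT G ∧ F.1 ⊆ G.1 := by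
  cases y with
  | inl K => exact h.elim
  | inr G => exact ⟨G, rfl, h⟩

/-- minimal flat containing X -/
def mflat (M : Matroid α) (X : Set α) : Set α := ⋂₀ {F | M.IsFlat F ∧ X ⊆ F}

lemma mflat_flat {X : Set α} (hX : X ⊆ M.E) : M.IsFlat (mflat M X) := by
  have hne : Nonempty ↥{F : Set α | M.IsFlat F ∧ X ⊆ F} := ⟨⟨M.E, M.ground_isFlat, hX⟩⟩
  rw [mflat, Set.sInter_eq_iInter]
  exact Matroid.IsFlat.iInter fun F => F.2.1

lemma subset_mflat (X : Set α) : X ⊆ mflat M X :=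
  Set.subset_sInter fun _ hF => hF.2

lemma mflat_subset {X G : Set α} (hG : M.IsFlat G) (hXG : X ⊆ G) : mflat M X ⊆ G :=
  Set.sInter_subset_of_mem ⟨hG, hXG⟩


-- ===== building set: inr case =====

def g0 (F : {F : Set α // M.IsFlat F}) : maxBelow (tildeG M) (inrT F) :=
  ⟨inrT F, Or.inr ⟨F.1, F.2, rfl⟩, le_rfl, fun _ _ h1 h2 => le_antisymm h1 h2⟩

lemma maxBelow_inr_eq (F : {F : Set α // M.IsFlat F}) (G : maxBelow (tildeG M) (inrT F)) :
    G = g0 F :=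
  Subtype.ext (G.2.2.2 _ (g0 F).2.1 le_rfl G.2.2.1).symm

def isoInr (F : {F : Set α // M.IsFlat F}) :
    (∀ G : maxBelow (tildeG M) (inrT F), Set.Icc (⊥ : TildeL M) G.1) ≃o
      Set.Icc (⊥ : TildeL M) (inrT F) where
  toFun f := ⟨(f (g0 F)).1, (f (g0 F)).2⟩
  invFun y G := ⟨y.1, y.2.1, by rw [maxBelow_inr_eq F G]; exact y.2.2⟩
  left_inv f := by
    funext G
    have hG := maxBelow_inr_eq F G
    subst hG
    exact Subtype.ext rfl
  right_inv y := rfl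
  map_rel_iff' := by
    intro f g
    constructor
    · intro h G
      have hG := maxBelow_inr_eq F G
      subst hG
      exact h
    · intro h
      exact h (g0 F)

lemma unitInr (F : {F : Set α // M.IsFlat F}) (G : maxBelow (tildeG M) (inrT F)) :
    ((isoInr F (fun H => if H = G then ⟨H.1, bot_le, le_rfl⟩ else ⟨⊥, le_rfl, bot_le⟩) :
      Set.Icc (⊥ : TildeL M) (inrT F)) : TildeL M) = G.1 := by
  have hG := maxBelow_inr_eq F G
  subst hG
  show ((if g0 F = g0 F then (⟨(g0 F).1, bot_le, le_rfl⟩ : Set.Icc (⊥ : TildeL M) (g0 F).1)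
      else ⟨⊥, le_rfl, bot_le⟩) : Set.Icc (⊥ : TildeL M) (g0 F).1).1 = (g0 F).1
  rw [if_pos rfl]

-- ===== building set: inl case =====

variable (J : {I : Set α // M.Indep I})

lemma maxBelow_inl (G : maxBelow (tildeG M) (inlT J)) :
    ∃ i, i ∈ J.1 ∧ ∃ h : M.Indep {i}, G.1 = inlT ⟨{i}, h⟩ := by
  obtain ⟨x, hxG, hxle, -⟩ := G
  rcases hxG with ⟨i, h, rfl⟩ | ⟨F, h, rfl⟩
  · exact ⟨i, hxle rfl, h, rfl⟩
  · exact hxle.elim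

def mkSing (i : α) (hi : i ∈ J.1) : maxBelow (tildeG M) (inlT J) :=
  ⟨inlT ⟨{i}, J.2.subset (Set.singleton_subset_iff.2 hi)⟩,
   Or.inl ⟨i, J.2.subset (Set.singleton_subset_iff.2 hi), rfl⟩,
   Set.singleton_subset_iff.2 hi,
   by
     rintro G' (⟨j, h, rfl⟩ | ⟨F, h, rfl⟩) hle hle2
     · have hij : i = j := hle2 rfl
       subst hij
       rfl
     · exact hle.elim⟩

def U (f : ∀ G : maxBelow (tildeG M) (inlT J), Set.Icc (⊥ : TildeL M) G.1) : Set α :=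
  ⋃ G, carrier (f G).1

lemma U_subset (f : ∀ G : maxBelow (tildeG M) (inlT J), Set.Icc (⊥ : TildeL M) G.1) :
    U J f ⊆ J.1 :=
  Set.iUnion_subset fun G => (carrier_mono (f G).2.2).trans (carrier_mono G.2.2.1)

lemma fval_cases (f : ∀ G : maxBelow (tildeG M) (inlT J), Set.Icc (⊥ : TildeL M) G.1)
    (G : maxBelow (tildeG M) (inlT J)) : (f G).1 = ⊥ ∨ (f G).1 = G.1 := by
  obtain ⟨i, hiJ, h, hG⟩ := maxBelow_inl J G
  have hle : (f G).1 ≤ inlT ⟨{i}, h⟩ := hG ▸ (f G).2.2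
  obtain ⟨K, hKeq, hKsub⟩ := le_inl_cases hle
  rcases Set.subset_singleton_iff_eq.1 hKsub with h0 | h1
  · exact Or.inl (by rw [hKeq, bot_eq]; exact congrArg Sum.inl (Subtype.ext h0))
  · exact Or.inr (by rw [hKeq, hG]; exact congrArg Sum.inl (Subtype.ext h1))

lemma mem_U_iff (f : ∀ G : maxBelow (tildeG M) (inlT J), Set.Icc (⊥ : TildeL M) G.1)
    (G : maxBelow (tildeG M) (inlT J)) {i : α} {h : M.Indep {i}}
    (hG : G.1 = inlT ⟨{i}, h⟩) :
    i ∈ U J f ↔ (f G).1 = G.1 := by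
  constructor
  · intro hiU
    obtain ⟨G', hmem⟩ := Set.mem_iUnion.1 hiU
    obtain ⟨j, hjJ, h', hG'⟩ := maxBelow_inl J G'
    have hsub : carrier (f G').1 ⊆ ({j} : Set α) := by
      intro a haa
      have h3 := carrier_mono (f G').2.2 haa
      rw [hG'] at h3
      exact h3
    have hij : i = j := hsub hmem
    subst hij
    have hGG' : G' = G := Subtype.ext (by rw [hG', hG])
    rw [hGG'] at hmem
    rcases fval_cases J f G with h0 | h1
    · rw [h0] at hmem
      exact absurd hmem (Set.notMem_empty i)
    · exact h1
  · intro hfG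
    refine Set.mem_iUnion.2 ⟨G, ?_⟩
    rw [hfG, hG]
    exact rfl

def toF (f : ∀ G : maxBelow (tildeG M) (inlT J), Set.Icc (⊥ : TildeL M) G.1) :
    Set.Icc (⊥ : TildeL M) (inlT J) :=
  ⟨inlT ⟨U J f, J.2.subset (U_subset J f)⟩, bot_le, inl_le (U_subset J f)⟩

noncomputable def invF (y : Set.Icc (⊥ : TildeL M) (inlT J)) (G : maxBelow (tildeG M) (inlT J)) :
    Set.Icc (⊥ : TildeL M) G.1 :=
  if carrier G.1 ⊆ carrier y.1 then ⟨G.1, bot_le, le_rfl⟩ else ⟨⊥, le_rfl, bot_le⟩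

lemma invF_pos {y : Set.Icc (⊥ : TildeL M) (inlT J)} {G : maxBelow (tildeG M) (inlT J)}
    (h : carrier G.1 ⊆ carrier y.1) : invF J y G = ⟨G.1, bot_le, le_rfl⟩ := if_pos h

lemma invF_neg {y : Set.Icc (⊥ : TildeL M) (inlT J)} {G : maxBelow (tildeG M) (inlT J)}
    (h : ¬ carrier G.1 ⊆ carrier y.1) : invF J y G = ⟨⊥, le_rfl, bot_le⟩ := if_neg h

lemma carrier_toF (f : ∀ G : maxBelow (tildeG M) (inlT J), Set.Icc (⊥ : TildeL M) G.1) :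
    carrier (toF J f).1 = U J f := rfl

noncomputable def isoInl : (∀ G : maxBelow (tildeG M) (inlT J), Set.Icc (⊥ : TildeL M) G.1) ≃o
    Set.Icc (⊥ : TildeL M) (inlT J) where
  toFun := toF J
  invFun := invF J
  left_inv f := by
    funext G
    obtain ⟨i, hiJ, h, hG⟩ := maxBelow_inl J G
    have hcar : carrier G.1 = ({i} : Set α) := by rw [hG]; rfl
    by_cases hc : (f G).1 = G.1
    · have hiU : i ∈ U J f := (mem_U_iff J f G hG).2 hc
      have hcond : carrier G.1 ⊆ carrier (toF J f).1 := by
        rw [hcar, carrier_toF]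
        exact Set.singleton_subset_iff.2 hiU
      rw [invF_pos J hcond]
      exact Subtype.ext hc.symm
    · have hcond : ¬ carrier G.1 ⊆ carrier (toF J f).1 := by
        rw [hcar, carrier_toF]
        intro hcond2
        exact hc ((mem_U_iff J f G hG).1 (hcond2 rfl))
      rw [invF_neg J hcond]
      rcases fval_cases J f G with h0 | h1
      · exact Subtype.ext h0.symm
      · exact absurd h1 hc
  right_inv y := by
    obtain ⟨K, hKeq, hKsub⟩ := le_inl_cases y.2.2
    have hcy : carrier y.1 = K.1 := by rw [hKeq]; rfl
    apply Subtype.ext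
    have hU : U J (invF J y) = K.1 := by
      apply Set.Subset.antisymm
      · apply Set.iUnion_subset
        intro G
        by_cases hc : carrier G.1 ⊆ carrier y.1
        · rw [invF_pos J hc]
          exact (hcy ▸ hc : carrier G.1 ⊆ K.1)
        · rw [invF_neg J hc]
          exact Set.empty_subset K.1
      · intro a ha
        refine Set.mem_iUnion.2 ⟨mkSing J a (hKsub ha), ?_⟩
        have hcond : carrier (mkSing J a (hKsub ha)).1 ⊆ carrier y.1 := by
          rw [hcy]
          exact Set.singleton_subset_iff.2 ha
        rw [invF_pos J hcond]
        exact rfl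
    show (toF J (invF J y)).1 = y.1
    rw [hKeq]
    exact congrArg Sum.inl (Subtype.ext hU)
  map_rel_iff' := by
    intro f g
    constructor
    · intro hUU G
      obtain ⟨i, hiJ, h, hG⟩ := maxBelow_inl J G
      rcases fval_cases J f G with h0 | h1
      · show (f G).1 ≤ (g G).1
        rw [h0]
        exact bot_le
      · have hiU : i ∈ U J f := (mem_U_iff J f G hG).2 h1
        have hiUg : i ∈ U J g := hUU hiU
        have h2 := (mem_U_iff J g G hG).1 hiUg
        show (f G).1 ≤ (g G).1
        rw [h1, h2]
    · intro hfg
      show U J f ⊆ U J g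
      exact Set.iUnion_mono fun G => carrier_mono (hfg G)

lemma unitInl (G : maxBelow (tildeG M) (inlT J)) :
    ((isoInl J (fun H => if H = G then ⟨H.1, bot_le, le_rfl⟩ else ⟨⊥, le_rfl, bot_le⟩) :
      Set.Icc (⊥ : TildeL M) (inlT J)) : TildeL M) = G.1 := by
  obtain ⟨i, hiJ, h, hG⟩ := maxBelow_inl J G
  have hU : U J (fun H => if H = G then ⟨H.1, bot_le, le_rfl⟩ else ⟨⊥, le_rfl, bot_le⟩)
      = ({i} : Set α) := by
    apply Set.Subset.antisymm
    · apply Set.iUnion_subset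
      intro H
      rcases eq_or_ne H G with rfl | hne
      · simp only [if_pos rfl]
        rw [hG]
        exact Set.Subset.rfl
      · simp only [if_neg hne]
        exact Set.empty_subset _
    · intro a ha
      refine Set.mem_iUnion.2 ⟨G, ?_⟩
      simp only [if_pos rfl]
      show a ∈ carrier G.1
      rw [hG]
      exact ha
  show (toF J _).1 = G.1
  rw [hG]
  exact congrArg Sum.inl (Subtype.ext hU)

end TAux

open TAux in
lemma isLUB_inr_mflat {M : Matroid α} {T : Finset (TildeL M)} {X : Set α} (hX : X ⊆ M.E)
    (hub : ∀ x ∈ T, carrier x ⊆ X)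
    (hlb : ∀ y ∈ upperBounds (↑T : Set (TildeL M)),
      ∃ G : {F : Set α // M.IsFlat F}, y = inrT G ∧ X ⊆ G.1) :
    IsLUB (↑T : Set (TildeL M)) (inrT ⟨mflat M X, mflat_flat hX⟩) := by
  constructor
  · intro x hx
    exact le_inr ((hub x hx).trans (subset_mflat X))
  · intro y hy
    obtain ⟨G, rfl, hXG⟩ := hlb y hy
    show mflat M X ⊆ G.1
    exact mflat_subset G.2 hXG


/-- `𝒢` is a building set of the bounded-below poset `L`: for every `X > ⊥`,
with `max 𝒢_{≤X} = {G_1, …, G_k}`, there is an isomorphism of posets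
`∏_i [⊥, G_i] ≅ [⊥, X]` sending the tuple which is `G_i` in coordinate `i`
and `⊥` elsewhere to `G_i`. -/
def IsBuildingSet {L : Type*} [PartialOrder L] [OrderBot L] (𝒢 : Set L) : Prop :=
  (⊥ ∉ 𝒢) ∧ ∀ X : L, ⊥ < X →
    ∃ e : (∀ G : maxBelow 𝒢 X, Set.Icc (⊥ : L) G.1) ≃o Set.Icc (⊥ : L) X,
      ∀ G : maxBelow 𝒢 X,
        ((e (fun H => if H = G then ⟨H.1, bot_le, le_rfl⟩ else ⟨⊥, le_rfl, bot_le⟩) : L)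
          = G.1)

/-- `N ⊆ 𝒢` is nested: for any pairwise incomparable `G_1, …, G_t ∈ N` with
`t ≥ 2`, the join `G_1 ∨ ⋯ ∨ G_t` is not in `𝒢`. -/
def IsNested {L : Type*} [PartialOrder L] (𝒢 : Set L) (N : Set L) : Prop :=
  N ⊆ 𝒢 ∧ ∀ T : Finset L, ↑T ⊆ N → 2 ≤ T.card →
    (∀ x ∈ T, ∀ y ∈ T, x ≠ y → ¬ x ≤ y ∧ ¬ y ≤ x) →
    ∀ s, IsLUB (T : Set L) s → s ∉ 𝒢

open TAux

/-- `G̃` is a building set of `L̃(M)`, and a subset `N ⊆ G̃` is nested if and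
only if `N = {{i} : i ∈ I} ∪ {F_* : F ∈ 𝓕}` for some independent set `I` and
some chain of flats `𝓕` with `I` contained in every member of `𝓕` (i.e.
`I ⊆ min 𝓕`). -/
theorem tildeG_building_and_nested [Fintype α] (M : Matroid α) :
    IsBuildingSet (tildeG M) ∧
    ∀ N ⊆ tildeG M,
      (IsNested (tildeG M) N ↔
        ∃ (I : Set α) (𝓕 : Set (Set α)),
          M.Indep I ∧ (∀ F ∈ 𝓕, M.IsFlat F) ∧ IsChain (· ⊆ ·) 𝓕 ∧
          (∀ F ∈ 𝓕, I ⊆ F) ∧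
          N = {x | (∃ i ∈ I, ∃ h : M.Indep {i}, x = Sum.inl ⟨{i}, h⟩) ∨
                   (∃ F ∈ 𝓕, ∃ h : M.IsFlat F, x = Sum.inr ⟨F, h⟩)}) := by
  constructor
  · constructor
    · rintro (⟨i, h, heq⟩ | ⟨F, h, heq⟩)
      · rw [TAux.bot_eq] at heq
        have h2 : (∅ : Set α) = {i} := congrArg carrier heq
        exact Set.singleton_ne_empty i h2.symm
      · rw [TAux.bot_eq] at heq
        exact Sum.inl_ne_inr heq
    · intro X _hX
      cases X with
      | inl J => exact ⟨isoInl J, unitInl J⟩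
      | inr F => exact ⟨isoInr F, unitInr F⟩
  · intro N hNsub
    constructor
    · -- nested → structure
      intro hN
      refine ⟨{i | ∃ h : M.Indep {i}, Sum.inl ⟨{i}, h⟩ ∈ N},
              {F | ∃ h : M.IsFlat F, Sum.inr ⟨F, h⟩ ∈ N}, ?_, ?_, ?_, ?_, ?_⟩
      · -- independence
        by_contra hdep
        set I : Set α := {i | ∃ h : M.Indep {i}, Sum.inl ⟨{i}, h⟩ ∈ N} with hIdef
        have hind : ∀ i ∈ I, M.Indep {i} := fun i hi => hi.choose
        have hex : ∃ i ∈ I, ∃ j ∈ I, i ≠ j := by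
          by_contra hcon
          push_neg at hcon
          apply hdep
          rcases I.eq_empty_or_nonempty with he | ⟨i, hi⟩
          · rw [he]; exact M.empty_indep
          · have hsub : I ⊆ {i} := fun j hj => hcon j hj i hi
            exact (hind i hi).subset hsub
        obtain ⟨i, hi, j, hj, hij⟩ := hex
        have hIE : I ⊆ M.E := fun a ha =>
          Set.singleton_subset_iff.1 (hind a ha).subset_ground
        let f : α → TildeL M := fun a =>
          if h : M.Indep {a} then Sum.inl ⟨{a}, h⟩ else ⊥
        have hfc : ∀ a ∈ I, carrier (f a) = ({a} : Set α) := by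
          intro a ha
          show carrier (dite _ _ _) = _
          change carrier (f a) = _; rw [show f a = Sum.inl ⟨{a}, hind a ha⟩ from dif_pos (hind a ha)]
          rfl
        have hfN : ∀ a ∈ I, f a ∈ N := by
          intro a ha
          obtain ⟨h, hmem⟩ := ha
          show (dite _ _ _) ∈ N
          change f a ∈ N; rw [show f a = Sum.inl ⟨{a}, h⟩ from dif_pos h]
          exact hmem
        set T : Finset (TildeL M) := (Set.toFinite I).toFinset.image f with hTdef
        have hmemT : ∀ a ∈ I, f a ∈ T := fun a ha =>
          Finset.mem_image.2 ⟨a, (Set.Finite.mem_toFinset _).2 ha, rfl⟩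
        have hTmem : ∀ x ∈ T, ∃ a ∈ I, f a = x := by
          intro x hx
          obtain ⟨a, ha, rfl⟩ := Finset.mem_image.1 hx
          exact ⟨a, (Set.Finite.mem_toFinset _).1 ha, rfl⟩
        have hfinj : ∀ a ∈ I, ∀ b ∈ I, f a = f b → a = b := by
          intro a ha b hb hab
          have := congrArg carrier hab
          rw [hfc a ha, hfc b hb] at this
          exact Set.singleton_eq_singleton_iff.1 this
        have hTN : (↑T : Set (TildeL M)) ⊆ N := by
          intro x hx
          obtain ⟨a, ha, rfl⟩ := hTmem x hx
          exact hfN a ha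
        have hcard : 2 ≤ T.card :=
          Finset.one_lt_card.2 ⟨f i, hmemT i hi, f j, hmemT j hj,
            fun hc => hij (hfinj i hi j hj hc)⟩
        have hinc : ∀ x ∈ T, ∀ y ∈ T, x ≠ y → ¬ x ≤ y ∧ ¬ y ≤ x := by
          intro x hx y hy hxy
          obtain ⟨a, ha, rfl⟩ := hTmem x hx
          obtain ⟨b, hb, rfl⟩ := hTmem y hy
          have hab : a ≠ b := fun hc => hxy (by rw [hc])
          constructor
          · intro hle
            have := carrier_mono hle
            rw [hfc a ha, hfc b hb] at this
            exact hab (this rfl)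
          · intro hle
            have := carrier_mono hle
            rw [hfc a ha, hfc b hb] at this
            exact hab.symm (this rfl)
        have hub : ∀ x ∈ T, carrier x ⊆ I := by
          intro x hx
          obtain ⟨a, ha, rfl⟩ := hTmem x hx
          rw [hfc a ha]
          exact Set.singleton_subset_iff.2 ha
        have hlb : ∀ y ∈ upperBounds (↑T : Set (TildeL M)),
            ∃ G : {F : Set α // M.IsFlat F}, y = inrT G ∧ I ⊆ G.1 := by
          intro y hy
          have hIy : I ⊆ carrier y := by
            intro a ha
            have h1 := carrier_mono (hy (Finset.mem_coe.2 (hmemT a ha)))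
            rw [hfc a ha] at h1
            exact h1 rfl
          cases y with
          | inl K => exact absurd (K.2.subset hIy) hdep
          | inr G => exact ⟨G, rfl, hIy⟩
        exact hN.2 T hTN hcard hinc _ (isLUB_inr_mflat hIE hub hlb)
          (Or.inr ⟨mflat M I, mflat_flat hIE, rfl⟩)
      · exact fun F hF => hF.choose
      · -- chain
        intro F₁ h₁ F₂ h₂ hne
        by_contra hcon
        push_neg at hcon
        obtain ⟨hf₁, hN₁⟩ := h₁
        obtain ⟨hf₂, hN₂⟩ := h₂
        set x₁ : TildeL M := Sum.inr ⟨F₁, hf₁⟩ with hx₁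
        set x₂ : TildeL M := Sum.inr ⟨F₂, hf₂⟩ with hx₂
        have hxne : x₁ ≠ x₂ := by
          intro hc
          exact hne (congrArg (fun z => carrier z) hc)
        set T : Finset (TildeL M) := {x₁, x₂} with hTdef
        have hTN : (↑T : Set (TildeL M)) ⊆ N := by
          intro x hx
          rcases Finset.mem_insert.1 hx with rfl | hx2
          · exact hN₁
          · rw [Finset.mem_singleton.1 hx2]
            exact hN₂
        have hcard : 2 ≤ T.card := le_of_eq (Finset.card_pair hxne).symm
        have hinc : ∀ x ∈ T, ∀ y ∈ T, x ≠ y → ¬ x ≤ y ∧ ¬ y ≤ x := by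
          intro x hx y hy hxy
          rcases Finset.mem_insert.1 hx with rfl | hx2 <;>
            [skip; rw [Finset.mem_singleton.1 hx2]] <;>
          rcases Finset.mem_insert.1 hy with rfl | hy2 <;>
            [skip; rw [Finset.mem_singleton.1 hy2]; skip; rw [Finset.mem_singleton.1 hy2]]
          · exact absurd rfl hxy
          · exact ⟨hcon.1, hcon.2⟩
          · exact ⟨hcon.2, hcon.1⟩
          · exact absurd (Finset.mem_singleton.1 hx2 ▸ Finset.mem_singleton.1 hy2 ▸ rfl) hxy
        have hXE : F₁ ∪ F₂ ⊆ M.E := Set.union_subset hf₁.subset_ground hf₂.subset_ground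
        have hub : ∀ x ∈ T, carrier x ⊆ F₁ ∪ F₂ := by
          intro x hx
          rcases Finset.mem_insert.1 hx with rfl | hx2
          · exact Set.subset_union_left
          · rw [Finset.mem_singleton.1 hx2]
            exact Set.subset_union_right
        have hlb : ∀ y ∈ upperBounds (↑T : Set (TildeL M)),
            ∃ G : {F : Set α // M.IsFlat F}, y = inrT G ∧ F₁ ∪ F₂ ⊆ G.1 := by
          intro y hy
          have hy₁ : x₁ ≤ y := hy (Finset.mem_coe.2 (Finset.mem_insert_self _ _))
          have hy₂ : x₂ ≤ y := hy (Finset.mem_coe.2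
            (Finset.mem_insert_of_mem (Finset.mem_singleton_self _)))
          obtain ⟨G, rfl, hFG⟩ := inr_le_cases hy₁
          exact ⟨G, rfl, Set.union_subset hFG (carrier_mono hy₂)⟩
        exact hN.2 T hTN hcard hinc _ (isLUB_inr_mflat hXE hub hlb)
          (Or.inr ⟨mflat M (F₁ ∪ F₂), mflat_flat hXE, rfl⟩)
      · -- I ⊆ F
        intro F hF i hi
        by_contra hiF
        obtain ⟨hfF, hNF⟩ := hF
        obtain ⟨hIi, hNi⟩ := hi
        set x₁ : TildeL M := Sum.inl ⟨{i}, hIi⟩ with hx₁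
        set x₂ : TildeL M := Sum.inr ⟨F, hfF⟩ with hx₂
        have hxne : x₁ ≠ x₂ := fun hc => Sum.inl_ne_inr hc
        set T : Finset (TildeL M) := {x₁, x₂} with hTdef
        have hTN : (↑T : Set (TildeL M)) ⊆ N := by
          intro x hx
          rcases Finset.mem_insert.1 hx with rfl | hx2
          · exact hNi
          · rw [Finset.mem_singleton.1 hx2]
            exact hNF
        have hcard : 2 ≤ T.card := le_of_eq (Finset.card_pair hxne).symm
        have h12 : ¬ x₁ ≤ x₂ := by
          intro hle
          exact hiF (carrier_mono hle rfl)
        have h21 : ¬ x₂ ≤ x₁ := fun hle => hle.elim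
        have hinc : ∀ x ∈ T, ∀ y ∈ T, x ≠ y → ¬ x ≤ y ∧ ¬ y ≤ x := by
          intro x hx y hy hxy
          rcases Finset.mem_insert.1 hx with rfl | hx2 <;>
            [skip; rw [Finset.mem_singleton.1 hx2]] <;>
          rcases Finset.mem_insert.1 hy with rfl | hy2 <;>
            [skip; rw [Finset.mem_singleton.1 hy2]; skip; rw [Finset.mem_singleton.1 hy2]]
          · exact absurd rfl hxy
          · exact ⟨h12, h21⟩
          · exact ⟨h21, h12⟩
          · exact absurd (Finset.mem_singleton.1 hx2 ▸ Finset.mem_singleton.1 hy2 ▸ rfl) hxy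
        have hXE : insert i F ⊆ M.E :=
          Set.insert_subset (Set.singleton_subset_iff.1 hIi.subset_ground)
            hfF.subset_ground
        have hub : ∀ x ∈ T, carrier x ⊆ insert i F := by
          intro x hx
          rcases Finset.mem_insert.1 hx with rfl | hx2
          · exact Set.singleton_subset_iff.2 (Set.mem_insert i F)
          · rw [Finset.mem_singleton.1 hx2]
            exact Set.subset_insert i F
        have hlb : ∀ y ∈ upperBounds (↑T : Set (TildeL M)),
            ∃ G : {F : Set α // M.IsFlat F}, y = inrT G ∧ insert i F ⊆ G.1 := by
          intro y hy
          have hy₁ : x₁ ≤ y := hy (Finset.mem_coe.2 (Finset.mem_insert_self _ _))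
          have hy₂ : x₂ ≤ y := hy (Finset.mem_coe.2
            (Finset.mem_insert_of_mem (Finset.mem_singleton_self _)))
          obtain ⟨G, rfl, hFG⟩ := inr_le_cases hy₂
          refine ⟨G, rfl, Set.insert_subset ?_ hFG⟩
          exact carrier_mono hy₁ rfl
        exact hN.2 T hTN hcard hinc _ (isLUB_inr_mflat hXE hub hlb)
          (Or.inr ⟨mflat M (insert i F), mflat_flat hXE, rfl⟩)
      · -- N = described set
        ext x
        constructor
        · intro hx
          rcases hNsub hx with ⟨i, h, rfl⟩ | ⟨F, h, rfl⟩
          · exact Or.inl ⟨i, ⟨h, hx⟩, h, rfl⟩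
          · exact Or.inr ⟨F, ⟨h, hx⟩, h, rfl⟩
        · rintro (⟨i, hiI, h, rfl⟩ | ⟨F, hF, h, rfl⟩)
          · obtain ⟨h', hmem⟩ := hiI
            exact hmem
          · obtain ⟨h', hmem⟩ := hF
            exact hmem
    · -- structure → nested
      rintro ⟨I, 𝓕, hI, h𝓕, hchain, hI𝓕, rfl⟩
      refine ⟨hNsub, ?_⟩
      intro T hTN hcard hinc s hs
      have hall : ∀ x ∈ T, ∃ i, i ∈ I ∧ ∃ h : M.Indep {i}, x = Sum.inl ⟨{i}, h⟩ := by
        intro x hx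
        rcases hTN hx with ⟨i, hi, h, rfl⟩ | ⟨F, hF, h, rfl⟩
        · exact ⟨i, hi, h, rfl⟩
        · exfalso
          obtain ⟨y, hy, hyx⟩ : ∃ y ∈ T, y ≠ Sum.inr ⟨F, h⟩ := by
            obtain ⟨a, ha, b, hb, hab⟩ := Finset.one_lt_card.1 hcard
            by_cases hax : a = Sum.inr ⟨F, h⟩
            · exact ⟨b, hb, by rw [← hax]; exact fun hc => hab hc.symm⟩
            · exact ⟨a, ha, hax⟩
          rcases hTN hy with ⟨j, hj, h', rfl⟩ | ⟨F', hF', h'', rfl⟩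
          · exact (hinc _ hy _ hx hyx).1
              (le_inr (Set.singleton_subset_iff.2 (hI𝓕 F hF hj)))
          · have hFF' : F' ≠ F := by
              intro hc
              subst hc
              exact hyx rfl
            rcases hchain hF' hF hFF' with hle | hle
            · exact (hinc _ hy _ hx hyx).1 hle
            · exact (hinc _ hy _ hx hyx).2 hle
      set S : Set α := {a | ∃ x ∈ T, a ∈ carrier x} with hSdef
      have hSI : S ⊆ I := by
        rintro a ⟨x, hx, hax⟩
        obtain ⟨i, hiI, h, rfl⟩ := hall x hx
        have : a = i := hax
        rw [this]
        exact hiI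
      have hSind : M.Indep S := hI.subset hSI
      have hlub : IsLUB (↑T : Set (TildeL M)) (inlT ⟨S, hSind⟩) := by
        constructor
        · intro x hx
          obtain ⟨i, hiI, h, rfl⟩ := hall x hx
          show ({i} : Set α) ⊆ S
          exact Set.singleton_subset_iff.2 ⟨_, hx, rfl⟩
        · intro y hy
          apply inl_le
          rintro a ⟨x, hx, hax⟩
          exact carrier_mono (hy hx) hax
      have hseq : s = inlT ⟨S, hSind⟩ := hs.unique hlub
      rw [hseq]
      rintro (⟨k, hk, heq⟩ | ⟨F, hF, heq⟩)
      · have hSk : S = {k} := congrArg carrier heq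
        obtain ⟨a, ha, b, hb, hab⟩ := Finset.one_lt_card.1 hcard
        obtain ⟨i, hiI, hih, rfl⟩ := hall a ha
        obtain ⟨j, hjI, hjh, rfl⟩ := hall b hb
        have hiS : i ∈ S := ⟨_, ha, rfl⟩
        have hjS : j ∈ S := ⟨_, hb, rfl⟩
        have hik : i = k := by rw [hSk] at hiS; exact hiS
        have hjk : j = k := by rw [hSk] at hjS; exact hjS
        apply hab
        subst hik
        subst hjk
        rfl
      · exact Sum.inl_ne_inr heq
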